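/- Let K be a field and n ≥ 1. For every infinite sequence I : ℕ → Ideal (MvPolynomial (Fin n) K) of monomial ideals, there exist indices i < j such that I j ⊆ I i (Maclagan's theorem). -/

import Mathlib

namespace MaclaganAux

open Set

variable {α β : Type*}

section
variable [Preorder α] [Preorder β]

/-- Upper sets are partially well ordered by reverse inclusion. -/
def UPWO (α : Type*) [Preorder α] : Prop :=
  Set.PartiallyWellOrderedOn {U : Set α | IsUpperSet U} (fun U V => V ⊆ U)

theorem UPWO.of_finite [Finite α] : UPWO α := by
  haveI : IsRefl (Set α) (fun U V : Set α => V ⊆ U) := ⟨fun _ => subset_rfl⟩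
  exact Set.Finite.partiallyWellOrderedOn (Set.toFinite _)

theorem UPWO.of_orderIso (e : α ≃o β) (h : UPWO α) : UPWO β := by
  refine Set.partiallyWellOrderedOn_iff_exists_lt.2 ?_
  intro f hf
  obtain ⟨i, j, hij, hsub⟩ := Set.PartiallyWellOrderedOn.exists_lt h (f := fun n => e ⁻¹' (f n))
    (fun n => (hf n).preimage e.monotone)
  refine ⟨i, j, hij, fun x hx => ?_⟩
  have hx' : e.symm x ∈ e ⁻¹' (f j) := by simpa using hx
  simpa using hsub hx'

def slice (U : Set (α × ℕ)) (k : ℕ) : Set α := {x | (x, k) ∈ U}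

def shift (U : Set (α × ℕ)) : Set (α × ℕ) := {p | (p.1, p.2 + 1) ∈ U}

def stab (U : Set (α × ℕ)) : Set ℕ := {s | ∀ k, s ≤ k → slice U k = slice U s}

noncomputable def rk (U : Set (α × ℕ)) : ℕ := sInf (stab U)

theorem slice_upper {U : Set (α × ℕ)} (hU : IsUpperSet U) (k : ℕ) :
    IsUpperSet (slice U k) :=
  fun _ _ hxy hx => hU (Prod.mk_le_mk.2 ⟨hxy, le_rfl⟩) hx

theorem slice_mono {U : Set (α × ℕ)} (hU : IsUpperSet U) {k l : ℕ} (hkl : k ≤ l) :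
    slice U k ⊆ slice U l :=
  fun _ hx => hU (Prod.mk_le_mk.2 ⟨le_rfl, hkl⟩) hx

theorem shift_upper {U : Set (α × ℕ)} (hU : IsUpperSet U) : IsUpperSet (shift U) :=
  fun _ _ hpq hp => hU (Prod.mk_le_mk.2 ⟨hpq.1, Nat.succ_le_succ hpq.2⟩) hp

theorem subset_shift {U : Set (α × ℕ)} (hU : IsUpperSet U) : U ⊆ shift U :=
  fun p hp => hU (Prod.mk_le_mk.2 ⟨le_rfl, Nat.le_succ p.2⟩) hp

theorem stab_nonempty (h : UPWO α) {U : Set (α × ℕ)} (hU : IsUpperSet U) :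
    (stab U).Nonempty := by
  by_contra hne
  rw [Set.not_nonempty_iff_eq_empty] at hne
  have key : ∀ s : ℕ, ∃ k, s ≤ k ∧ slice U s ⊂ slice U k := by
    intro s
    have hs : s ∉ stab U := by simp [hne]
    simp only [stab, Set.mem_setOf_eq, not_forall] at hs
    obtain ⟨k, hsk, hne'⟩ := hs
    exact ⟨k, hsk, ssubset_of_subset_of_ne (slice_mono hU hsk) (Ne.symm hne')⟩
  choose nxt hle hlt using key
  let g : ℕ → ℕ := fun m => Nat.rec 0 (fun _ s => nxt s) m
  have hmono : ∀ m, slice U (g m) ⊂ slice U (g (m + 1)) := fun m => hlt (g m)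
  have hgmono : Monotone g := monotone_nat_of_le_succ (fun m => hle (g m))
  obtain ⟨i, j, hij, hsub⟩ := Set.PartiallyWellOrderedOn.exists_lt h (f := fun m => slice U (g m)) (fun m => slice_upper hU _)
  exact (hmono i).not_subset ((slice_mono hU (hgmono hij)).trans hsub)

theorem rk_mem (h : UPWO α) {U : Set (α × ℕ)} (hU : IsUpperSet U) : rk U ∈ stab U :=
  Nat.sInf_mem (stab_nonempty h hU)

theorem slice_shift (U : Set (α × ℕ)) (k : ℕ) : slice (shift U) k = slice U (k + 1) := rfl

theorem rk_shift_lt (h : UPWO α) {U : Set (α × ℕ)} (hU : IsUpperSet U) (h1 : rk U ≠ 0) :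
    rk (shift U) < rk U := by
  have hm := rk_mem h hU
  have hmem : rk U - 1 ∈ stab (shift U) := by
    intro k hk
    have e1 : rk U - 1 + 1 = rk U := by omega
    show slice U (k + 1) = slice U (rk U - 1 + 1)
    rw [e1]
    exact hm (k + 1) (by omega)
  calc rk (shift U) ≤ rk U - 1 := Nat.sInf_le hmem
    _ < rk U := by omega

theorem cyl_subset {U V : Set (α × ℕ)} (hUz : (0 : ℕ) ∈ stab U) (hVz : (0 : ℕ) ∈ stab V)
    (hsub : slice V 0 ⊆ slice U 0) : V ⊆ U := by
  rintro ⟨x, k⟩ hx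
  have hxV : x ∈ slice V k := hx
  rw [hVz k (Nat.zero_le k)] at hxV
  have hxU := hsub hxV
  rw [← hUz k (Nat.zero_le k)] at hxU
  exact hxU

theorem UPWO.prod_nat (h : UPWO α) : UPWO (α × ℕ) := by
  haveI : IsTrans (Set α) (fun U V : Set α => V ⊆ U) := ⟨fun _ _ _ h1 h2 => h2.trans h1⟩
  show Set.PartiallyWellOrderedOn {U : Set (α × ℕ) | IsUpperSet U} (fun U V => V ⊆ U)
  rw [Set.PartiallyWellOrderedOn.iff_not_exists_isMinBadSeq rk]
  rintro ⟨f, hf, hmin⟩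
  have hup : ∀ n, IsUpperSet (f n) := hf.1
  have hbad : ∀ m n, m < n → ¬ f n ⊆ f m := hf.2
  obtain ⟨φ, hφ⟩ := Set.PartiallyWellOrderedOn.exists_monotone_subseq h
    (f := fun n => slice (f n) 0) (fun n => slice_upper (hup n) 0)
  have hpair : ∀ a b, a < b → rk (f (φ a)) = 0 → rk (f (φ b)) = 0 → False := by
    intro a b hab ha hb
    have h0a : (0 : ℕ) ∈ stab (f (φ a)) := ha ▸ rk_mem h (hup _)
    have h0b : (0 : ℕ) ∈ stab (f (φ b)) := hb ▸ rk_mem h (hup _)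
    exact hbad (φ a) (φ b) (φ.strictMono hab) (cyl_subset h0a h0b (hφ a b hab.le))
  obtain ⟨c, hc⟩ : ∃ c, ∀ j, c ≤ j → rk (f (φ j)) ≠ 0 := by
    by_cases hz : ∃ a, rk (f (φ a)) = 0
    · obtain ⟨a, ha⟩ := hz
      exact ⟨a + 1, fun j hj h0 => hpair a j (by omega) ha h0⟩
    · exact ⟨0, fun j _ h0 => hz ⟨j, h0⟩⟩
  set N := φ c with hN
  set F : ℕ → Set (α × ℕ) := fun m => if m < N then f m else shift (f (φ (c + (m - N))))
    with hF
  have hFbad : Set.PartiallyWellOrderedOn.IsBadSeq (fun U V : Set (α × ℕ) => V ⊆ U)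
      {U : Set (α × ℕ) | IsUpperSet U} F := by
    constructor
    · intro m
      by_cases hm : m < N
      · simpa [hF, hm] using hup m
      · simpa [hF, hm] using shift_upper (hup _)
    · intro m n hmn
      by_cases hm : m < N <;> by_cases hn : n < N
      · simpa [hF, hm, hn] using hbad m n hmn
      · simp only [hF, if_pos hm, if_neg hn]
        intro hsub
        have hj : m < φ (c + (n - N)) := lt_of_lt_of_le hm (φ.monotone (Nat.le_add_right c _))
        exact hbad m _ hj ((subset_shift (hup _)).trans hsub)
      · exact absurd hmn (by omega)
      · simp only [hF, if_neg hm, if_neg hn]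
        intro hsub
        have hlt : c + (m - N) < c + (n - N) := by omega
        refine hbad (φ (c + (m - N))) (φ (c + (n - N))) (φ.strictMono hlt) ?_
        rintro ⟨x, k⟩ hx
        cases k with
        | zero => exact hφ _ _ hlt.le hx
        | succ k' => exact hsub (show (x, k') ∈ shift (f (φ (c + (n - N)))) from hx)
  refine hmin N F (fun m hm => by simp [hF, hm]) ?_ hFbad
  have hFN : F N = shift (f (φ c)) := by simp [hF]
  rw [hFN]
  exact rk_shift_lt h (hup _) (hc c le_rfl)

end

theorem upwo_pi : ∀ n : ℕ, UPWO (Fin n → ℕ)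
  | 0 => by
      haveI : Subsingleton (Fin 0 → ℕ) := ⟨fun a b => funext fun i => i.elim0⟩
      haveI : Finite (Fin 0 → ℕ) := Finite.of_subsingleton
      exact UPWO.of_finite
  | (n + 1) => by
      have e : ((Fin n → ℕ) × ℕ) ≃o (Fin (n + 1) → ℕ) :=
        { toFun := fun p => Fin.snoc p.1 p.2
          invFun := fun f => (Fin.init f, f (Fin.last n))
          left_inv := fun p => by simp [Fin.init_snoc, Fin.snoc_last]
          right_inv := fun f => Fin.snoc_init_self f
          map_rel_iff' := by
            intro a b
            simp only [Equiv.coe_fn_mk, Pi.le_def, Prod.le_def]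
            constructor
            · intro hle
              constructor
              · intro i
                have := hle i.castSucc
                simpa using this
              · have := hle (Fin.last n)
                simpa using this
            · intro hle i
              refine Fin.lastCases ?_ ?_ i
              · simpa using hle.2
              · intro j
                simpa using hle.1 j }
      exact UPWO.of_orderIso e (UPWO.prod_nat (upwo_pi n))

theorem upwo_finsupp (n : ℕ) : UPWO (Fin n →₀ ℕ) := by
  have e : (Fin n → ℕ) ≃o (Fin n →₀ ℕ) :=
    { toEquiv := Finsupp.equivFunOnFinite.symm
      map_rel_iff' := by
        intro a b
        constructor
        · intro hle i
          simpa using hle i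
        · intro hle i
          simpa using hle i }
  exact UPWO.of_orderIso e (upwo_pi n)

end MaclaganAux

/-- Maclagan's theorem: every infinite sequence of monomial ideals in
`K[X_1, …, X_n]` contains an ideal that is a subset of an earlier one. -/
theorem maclagan (K : Type*) [Field K] (n : ℕ) (hn : 1 ≤ n)
    (I : ℕ → Ideal (MvPolynomial (Fin n) K))
    (hmon : ∀ k, ∃ S : Set (Fin n →₀ ℕ),
      I k = Ideal.span ((fun s => (MvPolynomial.monomial s (1 : K))) '' S)) :
    ∃ i j, i < j ∧ I j ≤ I i := by
  classical
  choose S hS using hmon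
  set U : ℕ → Set (Fin n →₀ ℕ) := fun k => {t | ∃ s ∈ S k, s ≤ t} with hU
  have hupper : ∀ k, U k ∈ {V : Set (Fin n →₀ ℕ) | IsUpperSet V} := by
    intro k x y hxy hx
    obtain ⟨s, hs, hsx⟩ := hx
    exact ⟨s, hs, hsx.trans hxy⟩
  obtain ⟨i, j, hij, hsub⟩ := Set.PartiallyWellOrderedOn.exists_lt (MaclaganAux.upwo_finsupp n) (f := U) hupper
  refine ⟨i, j, hij, ?_⟩
  rw [hS j, hS i, Ideal.span_le]
  rintro p ⟨s, hsSj, rfl⟩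
  have hsU : s ∈ U i := hsub ⟨s, hsSj, le_rfl⟩
  obtain ⟨s', hs', hle⟩ := hsU
  rw [SetLike.mem_coe, MvPolynomial.mem_ideal_span_monomial_image]
  intro xi hxi
  rw [MvPolynomial.support_monomial, if_neg one_ne_zero, Finset.mem_singleton] at hxi
  subst hxi
  exact ⟨s', hs', hle⟩
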